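/- Asymptotic limit of the Strategy-1 micro update: assume σ_s, σ_a constant with σ_s > 0, fix h and Δt, and suppose ρ_h^{n+k} = O(1) and g_{h,q}^{n+k} = O(1) for all k = 0,...,s−1 and all q as ε → 0. Then the updated micro variable satisfies g_{h,q}^{n+s} = −(v_q/(c_s σ_s)) Σ_{k=0}^{s-1} b_k D_h^- ρ_h^{n+k} + O(ε). -/

import Mathlib

open Finset Filter Topology

/-- Asymptotic limit of the Strategy-1 micro update: with constant `σ_s > 0`, `σ_a`,
fixed `h` and `Δt`, and `O(1)` previous numerical solutions, the updated micro variable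
satisfies `g_{h,q}^{n+s} = −(v_q/(c_s σ_s)) Σ_k b_k 𝒟_h^- ρ_h^{n+k} + O(ε)` as `ε → 0⁺`. -/
theorem stmt_16 {V : Type*} [NormedAddCommGroup V] [NormedSpace ℝ V]
    [FiniteDimensional ℝ V]
    (Nv s : ℕ) (hs : 1 ≤ s)
    (a b : Fin s → ℝ) (c Δt σs σa : ℝ) (hc : 0 < c) (hΔt : 0 < Δt) (hσs : 0 < σs)
    (hcb : c = ∑ k, b k)
    (v : Fin Nv → ℝ)
    (Dm : V →ₗ[ℝ] V)                                  -- the DG derivative 𝒟_h^-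
    (T : (Fin Nv → V) →ₗ[ℝ] (Fin Nv → V))             -- q ↦ 𝒟_h^{up}(·;v_q) − ⟨𝒟_h^{up}(·;v)⟩_h
    (ρprev : ℝ → Fin s → V) (gprev : ℝ → Fin s → Fin Nv → V) (gnew : ℝ → Fin Nv → V)
    -- the Strategy-1 micro update, for each ε > 0
    (hrec : ∀ ε > (0 : ℝ), ∀ q : Fin Nv,
      (ε ^ 2 + Δt * c * σs) • gnew ε q
        = ε ^ 2 • (∑ k : Fin s, (a k - Δt * σa * b k) • gprev ε k q)
          - Δt • ((v q) • ∑ k : Fin s, b k • Dm (ρprev ε k))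
          - (Δt * ε) • (∑ k : Fin s, b k • T (gprev ε k) q))
    -- the previous solutions are O(1) as ε → 0⁺
    (hbdd : ∃ C : ℝ, ∀ᶠ ε in 𝓝[>] (0 : ℝ), ∀ k : Fin s,
      ‖ρprev ε k‖ ≤ C ∧ ∀ q, ‖gprev ε k q‖ ≤ C) :
    -- conclusion: g_{h,q}^{n+s} + (v_q/(c σ_s)) Σ_k b_k 𝒟_h^- ρ_h^{n+k} = O(ε)
    ∀ q : Fin Nv, ∃ C : ℝ, ∀ᶠ ε in 𝓝[>] (0 : ℝ),
      ‖gnew ε q + (v q / (c * σs)) • ∑ k : Fin s, b k • Dm (ρprev ε k)‖ ≤ C * ε := by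
  obtain ⟨C, hC⟩ := hbdd
  intro q
  set MD := ‖Dm.toContinuousLinearMap‖ with hMD
  set MT := ‖T.toContinuousLinearMap‖ with hMT
  set C0 := max C 0 with hC0def
  have hC0 : 0 ≤ C0 := le_max_right _ _
  have hMD0 : 0 ≤ MD := norm_nonneg _
  have hMT0 : 0 ≤ MT := norm_nonneg _
  set CA := (∑ k : Fin s, |a k - Δt * σa * b k|) * C0 with hCA
  set CB := (∑ k : Fin s, |b k|) * (MT * C0) with hCB
  set CS := (∑ k : Fin s, |b k|) * (MD * C0) with hCS
  have hCA0 : 0 ≤ CA := by positivity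
  have hCB0 : 0 ≤ CB := by positivity
  have hCS0 : 0 ≤ CS := by positivity
  refine ⟨(Δt * c * σs)⁻¹ * (CA + Δt * CB + |v q| / (c * σs) * CS), ?_⟩
  have h01 : Set.Ioo (0:ℝ) 1 ∈ 𝓝[>] (0:ℝ) :=
    Ioo_mem_nhdsGT_of_mem (Set.mem_Ico.2 ⟨le_refl 0, one_pos⟩)
  filter_upwards [hC, h01] with ε hCε hε01
  obtain ⟨hε, hε1⟩ := hε01
  have hε1' : ε ≤ 1 := le_of_lt hε1
  have hrecε := hrec ε hε q
  have hDpos : (0:ℝ) < ε ^ 2 + Δt * c * σs := by positivity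
  have hcσ : (0:ℝ) < c * σs := by positivity
  set S := ∑ k : Fin s, b k • Dm (ρprev ε k) with hSdef
  set A := ∑ k : Fin s, (a k - Δt * σa * b k) • gprev ε k q with hAdef
  set B := ∑ k : Fin s, b k • T (gprev ε k) q with hBdef
  have key : gnew ε q + (v q / (c * σs)) • S
      = (ε ^ 2 + Δt * c * σs)⁻¹ •
        (ε ^ 2 • A - (Δt * ε) • B + (v q * ε ^ 2 / (c * σs)) • S) := by
    rw [eq_inv_smul_iff₀ hDpos.ne']
    have hsc : (ε ^ 2 + Δt * c * σs) * (v q / (c * σs))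
        = v q * ε ^ 2 / (c * σs) + Δt * v q := by
      field_simp
    rw [smul_add, hrecε, smul_smul (ε ^ 2 + Δt * c * σs) (v q / (c * σs)), hsc]
    module
  rw [key, norm_smul, Real.norm_eq_abs, abs_of_pos (inv_pos.2 hDpos)]
  -- bounds on pieces
  have hS : ‖S‖ ≤ CS := by
    rw [hSdef, hCS, Finset.sum_mul]
    refine (norm_sum_le _ _).trans (Finset.sum_le_sum fun k _ => ?_)
    rw [norm_smul, Real.norm_eq_abs]
    have : ‖Dm (ρprev ε k)‖ ≤ MD * C0 := by
      calc ‖Dm (ρprev ε k)‖ = ‖Dm.toContinuousLinearMap (ρprev ε k)‖ := rfl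
        _ ≤ MD * ‖ρprev ε k‖ := (Dm.toContinuousLinearMap).le_opNorm _
        _ ≤ MD * C0 := by
            exact mul_le_mul_of_nonneg_left ((hCε k).1.trans (le_max_left _ _)) hMD0
    exact mul_le_mul_of_nonneg_left this (abs_nonneg _)
  have hA : ‖A‖ ≤ CA := by
    rw [hAdef, hCA, Finset.sum_mul]
    refine (norm_sum_le _ _).trans (Finset.sum_le_sum fun k _ => ?_)
    rw [norm_smul, Real.norm_eq_abs]
    exact mul_le_mul_of_nonneg_left (((hCε k).2 q).trans (le_max_left _ _)) (abs_nonneg _)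
  have hB : ‖B‖ ≤ CB := by
    rw [hBdef, hCB, Finset.sum_mul]
    refine (norm_sum_le _ _).trans (Finset.sum_le_sum fun k _ => ?_)
    rw [norm_smul, Real.norm_eq_abs]
    have hg : ‖gprev ε k‖ ≤ C0 := by
      rw [pi_norm_le_iff_of_nonneg hC0]
      exact fun i => ((hCε k).2 i).trans (le_max_left _ _)
    have : ‖T (gprev ε k) q‖ ≤ MT * C0 := by
      calc ‖T (gprev ε k) q‖ ≤ ‖T (gprev ε k)‖ := norm_le_pi_norm _ q
        _ = ‖T.toContinuousLinearMap (gprev ε k)‖ := rfl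
        _ ≤ MT * ‖gprev ε k‖ := (T.toContinuousLinearMap).le_opNorm _
        _ ≤ MT * C0 := mul_le_mul_of_nonneg_left hg hMT0
    exact mul_le_mul_of_nonneg_left this (abs_nonneg _)
  have hX : ‖ε ^ 2 • A - (Δt * ε) • B + (v q * ε ^ 2 / (c * σs)) • S‖
      ≤ (CA + Δt * CB + |v q| / (c * σs) * CS) * ε := by
    have hε2 : ε ^ 2 ≤ ε := by nlinarith
    calc ‖ε ^ 2 • A - (Δt * ε) • B + (v q * ε ^ 2 / (c * σs)) • S‖
        ≤ ‖ε ^ 2 • A - (Δt * ε) • B‖ + ‖(v q * ε ^ 2 / (c * σs)) • S‖ := norm_add_le _ _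
      _ ≤ ‖ε ^ 2 • A‖ + ‖(Δt * ε) • B‖ + ‖(v q * ε ^ 2 / (c * σs)) • S‖ := by
            gcongr; exact norm_sub_le _ _
      _ = ε ^ 2 * ‖A‖ + (Δt * ε) * ‖B‖ + (|v q| * ε ^ 2 / (c * σs)) * ‖S‖ := by
            rw [norm_smul, norm_smul, norm_smul, Real.norm_eq_abs, Real.norm_eq_abs,
              Real.norm_eq_abs, abs_of_nonneg (by positivity : (0:ℝ) ≤ ε ^ 2),
              abs_of_nonneg (by positivity : (0:ℝ) ≤ Δt * ε)]
            rw [abs_div, abs_of_pos hcσ, abs_mul, abs_of_nonneg (by positivity : (0:ℝ) ≤ ε ^ 2)]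
      _ ≤ ε * CA + (Δt * ε) * CB + (|v q| * ε / (c * σs)) * CS := by
            gcongr <;> first | assumption | positivity
      _ = (CA + Δt * CB + |v q| / (c * σs) * CS) * ε := by ring
  calc (ε ^ 2 + Δt * c * σs)⁻¹ * ‖ε ^ 2 • A - (Δt * ε) • B + (v q * ε ^ 2 / (c * σs)) • S‖
      ≤ (Δt * c * σs)⁻¹ * ((CA + Δt * CB + |v q| / (c * σs) * CS) * ε) := by
        apply mul_le_mul
        · exact inv_anti₀ (by positivity) (by nlinarith)
        · exact hX
        · exact norm_nonneg _
        · positivity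
    _ = (Δt * c * σs)⁻¹ * (CA + Δt * CB + |v q| / (c * σs) * CS) * ε := by ring
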